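/- Let r, s ∈ ℤ, let ℤ[ξ] = ℤ[T]/(T²−rT+s) (so ξ² = rξ − s), and let f(x) = x·Σ_{t≥0}(−ξ)^t x^t ∈ ℤ[ξ][[x]] (the expansion of x(1+ξx)^{−1}). Then f(F_{r,s}(x,y)) = f(x) + f(y) + (r−2ξ)·f(x)·f(y) in ℤ[ξ][[x,y]]; that is, f is a homomorphism from F_{r,s} to the formal group law F_q(x,y) = x + y + (r−2ξ)xy over ℤ[ξ], where (r−2ξ)² = r²−4s = q. -/

import Mathlib

/-- Substitution of a multivariate power series into a one-variable power series. -/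
noncomputable def psubst {τ R : Type*} [CommRing R]
    (a : MvPowerSeries τ R) (f : PowerSeries R) : MvPowerSeries τ R :=
  fun e => ∑ t ∈ Finset.range ((e.sum fun _ n => n) + 1),
    PowerSeries.coeff t f * MvPowerSeries.coeff e (a ^ t)

section Aux
variable {τ R : Type*} [CommRing R]

lemma degree_eq_sum (e : τ →₀ ℕ) : (e.sum fun _ n => n) = Finsupp.degree e := rfl

lemma degree_add' (a b : τ →₀ ℕ) :
    Finsupp.degree (a + b) = Finsupp.degree a + Finsupp.degree b := by
  classical
  simp only [← degree_eq_sum]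
  exact Finsupp.sum_add_index' (fun _ => rfl) (fun _ _ _ => rfl)

lemma coeff_pow_eq_zero' {a : MvPowerSeries τ R}
    (ha : MvPowerSeries.constantCoeff (σ := τ) (R := R) a = 0) {e : τ →₀ ℕ} {t : ℕ}
    (h : Finsupp.degree e < t) : MvPowerSeries.coeff e (a ^ t) = 0 := by
  classical
  exact MvPowerSeries.coeff_eq_zero_of_constantCoeff_nilpotent
    (m := 1) (by simp [ha]) (by omega)

lemma coeff_psubst (a : MvPowerSeries τ R) (f : PowerSeries R) (e : τ →₀ ℕ) :
    MvPowerSeries.coeff e (psubst a f) =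
      ∑ t ∈ Finset.range (Finsupp.degree e + 1),
        PowerSeries.coeff t f * MvPowerSeries.coeff e (a ^ t) := rfl

lemma coeff_psubst_le {a : MvPowerSeries τ R}
    (ha : MvPowerSeries.constantCoeff (σ := τ) (R := R) a = 0) (f : PowerSeries R) (e : τ →₀ ℕ)
    {N : ℕ} (hN : Finsupp.degree e ≤ N) :
    MvPowerSeries.coeff e (psubst a f) =
      ∑ t ∈ Finset.range (N + 1),
        PowerSeries.coeff t f * MvPowerSeries.coeff e (a ^ t) := by
  rw [coeff_psubst]
  apply Finset.sum_subset
  · intro x hx; simp only [Finset.mem_range] at *; omega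
  · intro x _ hx
    simp only [Finset.mem_range, not_lt] at hx
    rw [coeff_pow_eq_zero' ha (by omega), mul_zero]

lemma psubst_add (a : MvPowerSeries τ R) (f g : PowerSeries R) :
    psubst a (f + g) = psubst a f + psubst a g := by
  ext e
  simp only [map_add, coeff_psubst, add_mul, Finset.sum_add_distrib]

lemma psubst_Cmul (a : MvPowerSeries τ R) (c : R) (f : PowerSeries R) :
    psubst a (PowerSeries.C c * f) = MvPowerSeries.C (σ := τ) (R := R) c * psubst a f := by
  ext e
  simp only [coeff_psubst, PowerSeries.coeff_C_mul, MvPowerSeries.coeff_C_mul,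
    Finset.mul_sum, mul_assoc]

lemma psubst_X {a : MvPowerSeries τ R}
    (ha : MvPowerSeries.constantCoeff (σ := τ) (R := R) a = 0) :
    psubst a PowerSeries.X = a := by
  ext e
  rw [coeff_psubst]
  by_cases h : Finsupp.degree e = 0
  · have he : e = 0 := (Finsupp.degree_eq_zero_iff e).mp h
    simp [h, he, PowerSeries.coeff_X, ← ha, MvPowerSeries.coeff_zero_eq_constantCoeff]
  · rw [Finset.sum_eq_single 1]
    · simp
    · intro t _ ht; simp [PowerSeries.coeff_X, ht]
    · intro h1; exfalso; apply h1; simp only [Finset.mem_range]; omega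

lemma psubst_Xmul {a : MvPowerSeries τ R}
    (ha : MvPowerSeries.constantCoeff (σ := τ) (R := R) a = 0) (f : PowerSeries R) :
    psubst a (PowerSeries.X * f) = a * psubst a f := by
  classical
  ext e
  set n := Finsupp.degree e with hn
  have hL : MvPowerSeries.coeff e (psubst a (PowerSeries.X * f)) =
      ∑ u ∈ Finset.range (n + 1),
        PowerSeries.coeff u f * MvPowerSeries.coeff e (a ^ (u + 1)) := by
    rw [coeff_psubst, ← hn, Finset.sum_range_succ', Finset.sum_range_succ]
    simp only [PowerSeries.coeff_succ_X_mul]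
    have h0 : PowerSeries.coeff 0 (PowerSeries.X * f) = 0 := by
      simp [PowerSeries.coeff_zero_eq_constantCoeff]
    rw [h0, zero_mul, add_zero, coeff_pow_eq_zero' ha (by omega), mul_zero, add_zero]
  rw [hL, MvPowerSeries.coeff_mul]
  have hR : ∀ p ∈ Finset.HasAntidiagonal.antidiagonal e,
      MvPowerSeries.coeff p.1 a * MvPowerSeries.coeff p.2 (psubst a f) =
      ∑ u ∈ Finset.range (n + 1), MvPowerSeries.coeff p.1 a *
        (PowerSeries.coeff u f * MvPowerSeries.coeff p.2 (a ^ u)) := by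
    intro p hp
    rw [Finset.HasAntidiagonal.mem_antidiagonal] at hp
    have hd : Finsupp.degree p.2 ≤ n := by
      rw [hn, ← hp, degree_add']; omega
    rw [coeff_psubst_le ha f p.2 hd, Finset.mul_sum]
  rw [Finset.sum_congr rfl hR, Finset.sum_comm]
  apply Finset.sum_congr rfl
  intro u _
  rw [pow_succ', MvPowerSeries.coeff_mul, Finset.mul_sum]
  apply Finset.sum_congr rfl
  intro p _
  ring

/-- the homomorphism equation `psubst a f · (1 + ξ a) = a` in generic form -/
lemma psubst_key {ξ : R} {a : MvPowerSeries τ R}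
    (ha : MvPowerSeries.constantCoeff (σ := τ) (R := R) a = 0) :
    MvPowerSeries.C (σ := τ) (R := R) ξ * (a * psubst a
        (PowerSeries.mk fun t => if t = 0 then 0 else (-ξ) ^ (t - 1))) +
      psubst a (PowerSeries.mk fun t => if t = 0 then 0 else (-ξ) ^ (t - 1)) = a := by
  set f : PowerSeries R := PowerSeries.mk fun t => if t = 0 then 0 else (-ξ) ^ (t - 1) with hfdef
  have hfX : PowerSeries.C ξ * (PowerSeries.X * f) + f = PowerSeries.X := by
    ext n
    match n with
    | 0 =>
      simp [hfdef, PowerSeries.coeff_zero_eq_constantCoeff, map_add, map_mul,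
        PowerSeries.constantCoeff_X, PowerSeries.coeff_mk]
    | 1 =>
      simp only [map_add, PowerSeries.coeff_C_mul, PowerSeries.coeff_succ_X_mul,
        PowerSeries.coeff_X, hfdef, PowerSeries.coeff_mk]
      norm_num
    | (n+2) =>
      simp only [map_add, PowerSeries.coeff_C_mul, PowerSeries.coeff_succ_X_mul,
        PowerSeries.coeff_X, hfdef, PowerSeries.coeff_mk]
      rw [if_neg (by omega), if_neg (by omega), if_neg (by omega),
        show n + 1 - 1 = n by omega, show n + 2 - 1 = n + 1 by omega, pow_succ]
      ring
  have h := congrArg (psubst a) hfX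
  rw [psubst_add, psubst_Cmul, psubst_Xmul ha, psubst_X ha] at h
  exact h

end Aux

/-- `f(x) = x(1+ξx)⁻¹` is a homomorphism from `F_{r,s}` to
`F_q(x,y) = x + y + (r−2ξ)xy` over `ℤ[ξ] = ℤ[T]/(T²−rT+s)`. -/
theorem f_hom_Frs_Fq (r s : ℤ) :
    let R := AdjoinRoot ((Polynomial.X : Polynomial ℤ) ^ 2
      - Polynomial.C r * Polynomial.X + Polynomial.C s)
    let ξ : R := AdjoinRoot.root _
    -- f(x) = x(1+ξx)⁻¹ = Σ_{t≥1} (−ξ)^{t−1} x^t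
    let f : PowerSeries R := PowerSeries.mk fun t => if t = 0 then 0 else (-ξ) ^ (t - 1)
    -- F_{r,s} over ℤ[ξ]
    let geom : MvPowerSeries (Fin 2) R := fun e => if e 0 = e 1 then (s : R) ^ (e 0) else 0
    let Frs : MvPowerSeries (Fin 2) R :=
      (MvPowerSeries.X 0 + MvPowerSeries.X 1 +
        MvPowerSeries.C (σ := Fin 2) (R := R) (r : R) * MvPowerSeries.X 0 * MvPowerSeries.X 1) * geom
    -- f(F_{r,s}(x,y)) = f(x) + f(y) + (r−2ξ)·f(x)·f(y)
    psubst Frs f =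
      psubst (MvPowerSeries.X 0) f + psubst (MvPowerSeries.X 1) f +
        MvPowerSeries.C (σ := Fin 2) (R := R) ((r : R) - 2 * ξ) *
          (psubst (MvPowerSeries.X 0) f * psubst (MvPowerSeries.X 1) f) := by
  intro R ξ f geom Frs
  classical
  -- quadratic relation, before making ξ opaque
  have hxi : ξ ^ 2 = (r : R) * ξ - (s : R) := by
    have h0 := AdjoinRoot.eval₂_root ((Polynomial.X : Polynomial ℤ) ^ 2
      - Polynomial.C r * Polynomial.X + Polynomial.C s)
    simp only [Polynomial.eval₂_add, Polynomial.eval₂_sub, Polynomial.eval₂_mul,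
      Polynomial.eval₂_pow, Polynomial.eval₂_X, Polynomial.eval₂_C] at h0
    simp only [eq_intCast] at h0
    linear_combination h0
  have hgc : ∀ e' : Fin 2 →₀ ℕ,
      MvPowerSeries.coeff e' geom = if e' 0 = e' 1 then ((s : ℤ) : R) ^ (e' 0) else 0 :=
    fun _ => rfl
  have hf : f = PowerSeries.mk fun t => if t = 0 then 0 else (-ξ) ^ (t - 1) := rfl
  have hFrs : Frs = (MvPowerSeries.X 0 + MvPowerSeries.X 1 +
      MvPowerSeries.C (σ := Fin 2) (R := R) (r : R) * MvPowerSeries.X 0 * MvPowerSeries.X 1) * geom := rfl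
  clear_value ξ f geom Frs
  -- constant coefficients vanish
  have hc0 : MvPowerSeries.constantCoeff (σ := Fin 2) (R := R) (MvPowerSeries.X 0) = 0 :=
    MvPowerSeries.constantCoeff_X 0
  have hc1 : MvPowerSeries.constantCoeff (σ := Fin 2) (R := R) (MvPowerSeries.X 1) = 0 :=
    MvPowerSeries.constantCoeff_X 1
  have hcF : MvPowerSeries.constantCoeff (σ := Fin 2) (R := R) Frs = 0 := by
    rw [hFrs, map_mul]
    simp [map_add, map_mul, hc0, hc1]
  -- the three homomorphism equations
  have h1 := psubst_key (ξ := ξ) hcF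
  have h2 := psubst_key (ξ := ξ) hc0
  have h3 := psubst_key (ξ := ξ) hc1
  rw [← hf] at h1 h2 h3
  -- geometric series identity
  set d : Fin 2 →₀ ℕ := Finsupp.single 0 1 + Finsupp.single 1 1 with hd
  have hd0 : d 0 = 1 := by simp [hd]
  have hd1 : d 1 = 1 := by simp [hd]
  have hmon : (MvPowerSeries.monomial d ((s : ℤ) : R) : MvPowerSeries (Fin 2) R)
      = MvPowerSeries.C (σ := Fin 2) (R := R) ((s : ℤ) : R)
        * (MvPowerSeries.X 0 * MvPowerSeries.X 1) := by
    rw [MvPowerSeries.X_def, MvPowerSeries.X_def, hd]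
    rw [MvPowerSeries.monomial_mul_monomial]
    rw [show (MvPowerSeries.C (σ := Fin 2) (R := R) ((s:ℤ):R))
      = MvPowerSeries.monomial 0 ((s:ℤ):R) from rfl]
    rw [MvPowerSeries.monomial_mul_monomial]
    simp
  have hms : (MvPowerSeries.monomial d ((s : ℤ) : R)) * geom = geom - 1 := by
    ext e
    rw [map_sub, MvPowerSeries.coeff_monomial_mul]
    have hle : d ≤ e ↔ 1 ≤ e 0 ∧ 1 ≤ e 1 := by
      rw [Finsupp.le_def]
      constructor
      · intro h
        constructor
        · have := h 0; rw [hd0] at this; exact this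
        · have := h 1; rw [hd1] at this; exact this
      · rintro ⟨h0', h1'⟩ i
        fin_cases i
        · simpa [hd0] using h0'
        · simpa [hd1] using h1'
    have hez : e = 0 ↔ e 0 = 0 ∧ e 1 = 0 := by
      constructor
      · intro h; rw [h]; exact ⟨rfl, rfl⟩
      · rintro ⟨h0', h1'⟩
        ext i
        fin_cases i
        · simpa using h0'
        · simpa using h1'
    have hsub0 : (e - d) 0 = e 0 - 1 := by rw [Finsupp.tsub_apply, hd0]
    have hsub1 : (e - d) 1 = e 1 - 1 := by rw [Finsupp.tsub_apply, hd1]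
    rw [hgc, hgc, MvPowerSeries.coeff_one]
    by_cases h01 : e 0 = e 1
    · by_cases he0 : e 0 = 0
      · have hnd : ¬ d ≤ e := by rw [hle]; omega
        have he : e = 0 := hez.mpr ⟨he0, by omega⟩
        rw [if_neg hnd, if_pos h01, if_pos he, he0, pow_zero, sub_self]
      · have hdle : d ≤ e := by rw [hle]; omega
        have hne : ¬ e = 0 := by rw [hez]; omega
        have heq : (e - d) 0 = (e - d) 1 := by rw [hsub0, hsub1, h01]
        rw [if_pos hdle, if_pos h01, if_neg hne, if_pos heq, hsub0, sub_zero, ← pow_succ']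
        congr 1
        omega
    · have hne : ¬ e = 0 := by rw [hez]; omega
      rw [if_neg h01, if_neg hne, sub_zero]
      by_cases hdle : d ≤ e
      · have hneq : ¬ ((e - d) 0 = (e - d) 1) := by
          rw [hsub0, hsub1]
          rw [hle] at hdle
          omega
        rw [if_pos hdle, if_neg hneq, mul_zero]
      · rw [if_neg hdle]
  have h4 : geom * (1 - MvPowerSeries.C (σ := Fin 2) (R := R) ((s : ℤ) : R)
      * (MvPowerSeries.X 0 * MvPowerSeries.X 1)) = 1 := by
    rw [← hmon, mul_sub, mul_one, mul_comm geom, hms]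
    ring
  -- C-level identities
  have h5 : (MvPowerSeries.C (σ := Fin 2) (R := R) ξ) ^ 2
      = MvPowerSeries.C (σ := Fin 2) (R := R) ((r : ℤ) : R) * MvPowerSeries.C (σ := Fin 2) (R := R) ξ
        - MvPowerSeries.C (σ := Fin 2) (R := R) ((s : ℤ) : R) := by
    rw [← map_pow, hxi, map_sub, map_mul]
  have hCW : MvPowerSeries.C (σ := Fin 2) (R := R) (((r : ℤ) : R) - 2 * ξ)
      = MvPowerSeries.C (σ := Fin 2) (R := R) ((r : ℤ) : R) - 2 * MvPowerSeries.C (σ := Fin 2) (R := R) ξ := by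
    rw [map_sub, map_mul, map_ofNat]
  -- the unit
  have hu : IsUnit ((1 + MvPowerSeries.C (σ := Fin 2) (R := R) ξ * MvPowerSeries.X 0)
      * (1 + MvPowerSeries.C (σ := Fin 2) (R := R) ξ * MvPowerSeries.X 1)) := by
    rw [MvPowerSeries.isUnit_iff_constantCoeff]
    simp [map_add, map_mul, map_one, hc0, hc1]
  have hAB : (1 + MvPowerSeries.C (σ := Fin 2) (R := R) ξ * MvPowerSeries.X 0)
      * (1 + MvPowerSeries.C (σ := Fin 2) (R := R) ξ * MvPowerSeries.X 1)
      = (1 - MvPowerSeries.C (σ := Fin 2) (R := R) ((s : ℤ) : R)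
          * (MvPowerSeries.X 0 * MvPowerSeries.X 1))
        + MvPowerSeries.C (σ := Fin 2) (R := R) ξ * (MvPowerSeries.X 0 + MvPowerSeries.X 1 +
          MvPowerSeries.C (σ := Fin 2) (R := R) ((r : ℤ) : R) * MvPowerSeries.X 0 * MvPowerSeries.X 1) := by
    linear_combination MvPowerSeries.X 0 * MvPowerSeries.X 1 * h5
  have hPD : Frs * (1 - MvPowerSeries.C (σ := Fin 2) (R := R) ((s : ℤ) : R)
      * (MvPowerSeries.X 0 * MvPowerSeries.X 1))
      = MvPowerSeries.X 0 + MvPowerSeries.X 1 +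
        MvPowerSeries.C (σ := Fin 2) (R := R) ((r : ℤ) : R) * MvPowerSeries.X 0 * MvPowerSeries.X 1 := by
    rw [hFrs, mul_assoc, h4, mul_one]
  have hgu : psubst Frs f * ((1 + MvPowerSeries.C (σ := Fin 2) (R := R) ξ * MvPowerSeries.X 0)
      * (1 + MvPowerSeries.C (σ := Fin 2) (R := R) ξ * MvPowerSeries.X 1))
      = MvPowerSeries.X 0 + MvPowerSeries.X 1 +
        MvPowerSeries.C (σ := Fin 2) (R := R) ((r : ℤ) : R) * MvPowerSeries.X 0 * MvPowerSeries.X 1 := by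
    linear_combination psubst Frs f * hAB
      + (1 - MvPowerSeries.C (σ := Fin 2) (R := R) ((s : ℤ) : R)
          * (MvPowerSeries.X 0 * MvPowerSeries.X 1)) * h1
      + (1 - MvPowerSeries.C (σ := Fin 2) (R := R) ξ * psubst Frs f) * hPD
  have hrhs : (psubst (MvPowerSeries.X 0) f + psubst (MvPowerSeries.X 1) f +
        MvPowerSeries.C (σ := Fin 2) (R := R) (((r : ℤ) : R) - 2 * ξ) *
          (psubst (MvPowerSeries.X 0) f * psubst (MvPowerSeries.X 1) f))
      * ((1 + MvPowerSeries.C (σ := Fin 2) (R := R) ξ * MvPowerSeries.X 0)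
        * (1 + MvPowerSeries.C (σ := Fin 2) (R := R) ξ * MvPowerSeries.X 1))
      = MvPowerSeries.X 0 + MvPowerSeries.X 1 +
        MvPowerSeries.C (σ := Fin 2) (R := R) ((r : ℤ) : R) * MvPowerSeries.X 0 * MvPowerSeries.X 1 := by
    linear_combination ((1 + MvPowerSeries.C (σ := Fin 2) (R := R) ξ * MvPowerSeries.X 1)
        + MvPowerSeries.C (σ := Fin 2) (R := R) (((r:ℤ):R) - 2*ξ) * psubst (MvPowerSeries.X 1) f
          * (1 + MvPowerSeries.C (σ := Fin 2) (R := R) ξ * MvPowerSeries.X 1)) * h2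
      + ((1 + MvPowerSeries.C (σ := Fin 2) (R := R) ξ * MvPowerSeries.X 0)
        + MvPowerSeries.C (σ := Fin 2) (R := R) (((r:ℤ):R) - 2*ξ) * MvPowerSeries.X 0) * h3
      + MvPowerSeries.X 0 * MvPowerSeries.X 1 * hCW
  refine hu.mul_left_cancel ?_
  linear_combination hgu - hrhs
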